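/- Let (X,ρ,W) be a hyperbolic space, C ⊆ X a convex subset with the UAFPP for nonexpansive functions, (M,d) a metric space with the AFPP for nonexpansive functions, δ : M → C a nonexpansive selection, and T : (C × M)_∞ → (C × M)_∞ nonexpansive. Assume there exists b > 0 such that ρ(T_u(δ(u)), δ(u)) ≤ b for all u ∈ M, where T_u(x) = P_1(T(x,u)). Then r_H(T) = 0, i.e., inf{d_∞(h,T(h)) : h ∈ (C×M)_∞} = 0. -/

import Mathlib

open Metric Set

/-- Krasnoselski-Mann iteration: x₀ := x, x_{n+1} := W(x_n, T(x_n), λ_n). -/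
def KM {X : Type*} (W : X → X → ℝ → X) (T : X → X) (lam : ℕ → ℝ) (x : X) : ℕ → X
  | 0 => x
  | n + 1 => W (KM W T lam x n) (T (KM W T lam x n)) (lam n)

/-- M has the approximate fixed point property for nonexpansive mappings. -/
def AFPP (M : Type*) [MetricSpace M] : Prop :=
  ∀ S : M → M, (∀ u v : M, dist (S u) (S v) ≤ dist u v) →
    sInf {r : ℝ | ∃ u : M, r = dist u (S u)} = 0

/-- C has the uniform approximate fixed point property for nonexpansive self-maps. -/
def UAFPP {X : Type*} [MetricSpace X] (C : Set X) : Prop :=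
  ∀ ε > (0:ℝ), ∀ b > (0:ℝ), ∃ D > (0:ℝ), ∀ x ∈ C, ∀ S : X → X,
    (∀ y ∈ C, S y ∈ C) → (∀ y ∈ C, ∀ z ∈ C, dist (S y) (S z) ≤ dist y z) →
    dist x (S x) ≤ b →
    ∃ xstar ∈ C, dist x xstar ≤ D ∧ dist xstar (S xstar) ≤ ε

private lemma two_pow_aux (k : ℕ) : (k : ℝ) + 2 ≤ 2 * 2 ^ k := by
  have h : k + 1 < 2 ^ (k + 1) := Nat.lt_two_pow_self (n := k + 1)
  have h2 : (k : ℝ) + 2 ≤ (2 : ℝ) ^ (k + 1) := by exact_mod_cast h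
  have h3 : (2 : ℝ) ^ (k + 1) = 2 * 2 ^ k := by ring
  linarith

private lemma KM_mem {X : Type*} [MetricSpace X] (W : X → X → ℝ → X) (C : Set X)
    (hconv : ∀ x ∈ C, ∀ y ∈ C, ∀ l ∈ Set.Icc (0:ℝ) 1, W x y l ∈ C)
    (S : X → X) (hSC : ∀ y ∈ C, S y ∈ C)
    (x₀ : X) (hx₀ : x₀ ∈ C) : ∀ n, KM W S (fun _ => (1/2:ℝ)) x₀ n ∈ C := by
  have hhalf : (1/2:ℝ) ∈ Set.Icc (0:ℝ) 1 := by
    rw [Set.mem_Icc]; constructor <;> norm_num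
  intro n
  induction n with
  | zero => exact hx₀
  | succ n ih =>
    show W (KM W S (fun _ => (1/2:ℝ)) x₀ n) (S (KM W S (fun _ => (1/2:ℝ)) x₀ n)) (1/2) ∈ C
    exact hconv _ ih _ (hSC _ ih) _ hhalf

/-- Uniform asymptotic regularity of the Krasnoselski–Mann iteration with λ = 1/2,
derived from the UAFPP via a Goebel–Kirk type inequality. -/
private lemma KM_uniform {X : Type*} [MetricSpace X] (W : X → X → ℝ → X)
    (hW1 : ∀ x y z : X, ∀ l ∈ Set.Icc (0:ℝ) 1,
      dist z (W x y l) ≤ (1 - l) * dist z x + l * dist z y)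
    (C : Set X)
    (hconv : ∀ x ∈ C, ∀ y ∈ C, ∀ l ∈ Set.Icc (0:ℝ) 1, W x y l ∈ C)
    (hCU : UAFPP C) (b : ℝ) (hb : 0 < b) (ε : ℝ) (hε : 0 < ε) :
    ∃ N : ℕ, ∀ S : X → X, (∀ y ∈ C, S y ∈ C) →
      (∀ y ∈ C, ∀ z ∈ C, dist (S y) (S z) ≤ dist y z) →
      ∀ x₀ ∈ C, dist x₀ (S x₀) ≤ b →
      dist (KM W S (fun _ => (1/2:ℝ)) x₀ N) (S (KM W S (fun _ => (1/2:ℝ)) x₀ N)) ≤ ε := by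
  classical
  have hhalf : (1/2:ℝ) ∈ Set.Icc (0:ℝ) 1 := by
    rw [Set.mem_Icc]; constructor <;> norm_num
  obtain ⟨D, hD, hDspec⟩ := hCU (ε/4) (by positivity) b hb
  set n : ℕ := ⌈6 * D / ε⌉₊ + 1 with hn_def
  have hn1 : (1:ℝ) ≤ (n:ℝ) := by
    have : 1 ≤ n := Nat.le_add_left 1 _
    exact_mod_cast this
  have hn : 6 * D ≤ (n:ℝ) * ε := by
    have h1 : 6 * D / ε ≤ (⌈6 * D / ε⌉₊ : ℝ) := Nat.le_ceil _
    have h2 : ((⌈6 * D / ε⌉₊ : ℝ)) ≤ (n:ℝ) := by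
      rw [hn_def]; push_cast; linarith
    have h3 : 6 * D / ε ≤ (n:ℝ) := h1.trans h2
    have h4 : 6 * D / ε * ε ≤ (n:ℝ) * ε := mul_le_mul_of_nonneg_right h3 hε.le
    rwa [div_mul_cancel₀] at h4
    exact ne_of_gt hε
  set γ : ℝ := ε / 4 / 2 ^ n with hγ_def
  have hγ : 0 < γ := by positivity
  set R : ℕ := ⌈b / γ⌉₊ + 1 with hR_def
  have hbR : b < (R:ℝ) * γ := by
    have h1 : b / γ ≤ (⌈b / γ⌉₊ : ℝ) := Nat.le_ceil _
    have h3 : b / γ * γ ≤ (⌈b / γ⌉₊ : ℝ) * γ := mul_le_mul_of_nonneg_right h1 hγ.le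
    rw [div_mul_cancel₀ _ (ne_of_gt hγ)] at h3
    have h4 : (R:ℝ) = (⌈b / γ⌉₊ : ℝ) + 1 := by rw [hR_def]; push_cast; ring
    nlinarith
  refine ⟨R * n, ?_⟩
  intro S hSC hSne x₀ hx₀C hx₀b
  set x : ℕ → X := KM W S (fun _ => (1/2:ℝ)) x₀ with hxeq
  have hxstep : ∀ k, x (k+1) = W (x k) (S (x k)) (1/2) := by
    intro k; rw [hxeq]; rfl
  have hxC : ∀ k, x k ∈ C := by
    intro k; rw [hxeq]; exact KM_mem W C hconv S hSC x₀ hx₀C k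
  have hd0 : dist (x 0) (S (x 0)) ≤ b := by
    have hx0 : x 0 = x₀ := by rw [hxeq]; rfl
    rw [hx0]; exact hx₀b
  -- basic step estimates
  have step1 : ∀ k, dist (x k) (x (k+1)) ≤ dist (x k) (S (x k)) / 2 := by
    intro k
    have h := hW1 (x k) (S (x k)) (x k) (1/2) hhalf
    rw [← hxstep k, dist_self] at h
    linarith
  have step2 : ∀ k, dist (x (k+1)) (S (x k)) ≤ dist (x k) (S (x k)) / 2 := by
    intro k
    have h := hW1 (x k) (S (x k)) (S (x k)) (1/2) hhalf
    rw [← hxstep k, dist_self] at h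
    rw [dist_comm (S (x k)) (x (k+1)), dist_comm (S (x k)) (x k)] at h
    linarith
  have dstep : ∀ k, dist (x (k+1)) (S (x (k+1))) ≤ dist (x k) (S (x k)) := by
    intro k
    have h1 := dist_triangle (x (k+1)) (S (x k)) (S (x (k+1)))
    have h2 := hSne (x k) (hxC k) (x (k+1)) (hxC (k+1))
    have h3 := step1 k
    have h4 := step2 k
    linarith
  have dmono' : ∀ i k, dist (x (i+k)) (S (x (i+k))) ≤ dist (x i) (S (x i)) := by
    intro i k
    induction k with
    | zero => simp
    | succ k ih =>
      have hik : i + (k+1) = (i+k) + 1 := by omega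
      rw [hik]
      exact (dstep (i+k)).trans ih
  have dmono : ∀ i j, i ≤ j → dist (x j) (S (x j)) ≤ dist (x i) (S (x i)) := by
    intro i j hij
    obtain ⟨k, rfl⟩ := Nat.exists_eq_add_of_le hij
    exact dmono' i k
  have pathlen : ∀ i k, dist (x i) (x (i+k)) ≤ (k:ℝ) * dist (x i) (S (x i)) / 2 := by
    intro i k
    induction k with
    | zero => simp
    | succ k ih =>
      have hik : i + (k+1) = (i+k) + 1 := by omega
      rw [hik]
      have h1 := dist_triangle (x i) (x (i+k)) (x (i+k+1))
      have h2 := step1 (i+k)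
      have h3 := dmono' i k
      push_cast
      linarith
  -- Goebel–Kirk inequality for λ = 1/2
  have GK : ∀ (k i : ℕ), (1 + (k:ℝ)/2) * dist (x i) (S (x i))
      - 2^k * (dist (x i) (S (x i)) - dist (x (i+k)) (S (x (i+k))))
      ≤ dist (x i) (S (x (i+k))) := by
    intro k
    induction k with
    | zero => intro i; simp
    | succ k ih =>
      intro i
      have hik : i + (k+1) = (i+k) + 1 := by omega
      rw [hik]
      have h1 := hW1 (x i) (S (x i)) (S (x (i+k+1))) (1/2) hhalf
      rw [← hxstep i] at h1
      rw [dist_comm (S (x (i+k+1))) (x (i+1)), dist_comm (S (x (i+k+1))) (x i),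
        dist_comm (S (x (i+k+1))) (S (x i))] at h1
      have h2 := hSne (x i) (hxC i) (x (i+k+1)) (hxC (i+k+1))
      have h3 := pathlen i (k+1)
      rw [hik] at h3
      have h4 := ih (i+1)
      have hidx : i + 1 + k = i + k + 1 := by omega
      rw [hidx] at h4
      have h5 := dstep i
      have h6 := two_pow_aux k
      have hpow : (2:ℝ) ^ (k+1) = 2 ^ k * 2 := by ring
      have hprod : (0:ℝ) ≤ (2 * 2^k - ((k:ℝ) + 2)) *
          (dist (x i) (S (x i)) - dist (x (i+1)) (S (x (i+1)))) :=
        mul_nonneg (by linarith) (by linarith)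
      push_cast
      push_cast at h3
      rw [hpow]
      nlinarith [h1, h2, h3, h4, h5, hprod]
  -- approach to approximate fixed points
  have approach : ∀ p ∈ C, ∀ i k,
      dist (x (i+k)) p ≤ dist (x i) p + (k:ℝ) * dist p (S p) / 2 := by
    intro p hp i k
    induction k with
    | zero => simp
    | succ k ih =>
      have hik : i + (k+1) = (i+k) + 1 := by omega
      rw [hik]
      have h1 := hW1 (x (i+k)) (S (x (i+k))) p (1/2) hhalf
      rw [← hxstep (i+k)] at h1
      have h2 := dist_triangle p (S p) (S (x (i+k)))
      have h3 := hSne p hp (x (i+k)) (hxC (i+k))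
      have e1 : dist p (x (i+k)) = dist (x (i+k)) p := dist_comm _ _
      have e2 : dist p (x (i+k+1)) = dist (x (i+k+1)) p := dist_comm _ _
      push_cast
      linarith
  -- find a window with small drop
  have hwin : ∃ t < R, dist (x (t*n)) (S (x (t*n)))
      - dist (x ((t+1)*n)) (S (x ((t+1)*n))) ≤ γ := by
    by_contra hcon
    push_neg at hcon
    have key : ∀ t, t ≤ R → dist (x (t*n)) (S (x (t*n))) + (t:ℝ) * γ
        ≤ dist (x 0) (S (x 0)) := by
      intro t
      induction t with
      | zero => intro _; simp
      | succ t ih =>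
        intro ht
        have h1 := hcon t (by omega)
        have h2 := ih (by omega)
        push_cast
        push_cast at h2
        linarith
    have hcontr := key R le_rfl
    have hnn : (0:ℝ) ≤ dist (x (R*n)) (S (x (R*n))) := dist_nonneg
    linarith
  obtain ⟨t, htR, hdrop⟩ := hwin
  have hmulidx : (t+1)*n = t*n + n := by ring
  rw [hmulidx] at hdrop
  set i : ℕ := t * n with hi_def
  have hdi_b : dist (x i) (S (x i)) ≤ b := (dmono 0 i (Nat.zero_le _)).trans hd0
  obtain ⟨p, hpC, hpD, hpfix⟩ := hDspec (x i) (hxC i) S hSC hSne hdi_b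
  have h6 : dist (x (i+n)) p ≤ D + (n:ℝ) * (ε/4) / 2 := by
    have h := approach p hpC i n
    have h' : (n:ℝ) * dist p (S p) ≤ (n:ℝ) * (ε/4) :=
      mul_le_mul_of_nonneg_left hpfix (Nat.cast_nonneg n)
    linarith
  have hb2 : dist (x i) (S (x (i+n))) ≤ 2*D + ε/4 + (n:ℝ)*(ε/4)/2 := by
    have h1 := dist_triangle (x i) p (S (x (i+n)))
    have h2 := dist_triangle p (S p) (S (x (i+n)))
    have h3 := hSne p hpC (x (i+n)) (hxC (i+n))
    have e1 : dist p (x (i+n)) = dist (x (i+n)) p := dist_comm _ _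
    linarith
  have hGK := GK n i
  have hgterm : (2:ℝ)^n * (dist (x i) (S (x i)) - dist (x (i+n)) (S (x (i+n)))) ≤ ε/4 := by
    have h1 : (2:ℝ)^n * (dist (x i) (S (x i)) - dist (x (i+n)) (S (x (i+n))))
        ≤ (2:ℝ)^n * γ := by
      apply mul_le_mul_of_nonneg_left hdrop (by positivity)
    have h2 : (2:ℝ)^n * γ = ε/4 := by
      rw [hγ_def]
      field_simp
    linarith
  have hdi : dist (x i) (S (x i)) ≤ ε := by
    by_contra hcon2
    push_neg at hcon2
    have hnd : (n:ℝ) * ε ≤ (n:ℝ) * dist (x i) (S (x i)) :=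
      mul_le_mul_of_nonneg_left hcon2.le (Nat.cast_nonneg n)
    linarith
  have hfin1 : dist (x (i+n)) (S (x (i+n))) ≤ ε := (dmono' i n).trans hdi
  have hle : (t+1)*n ≤ R*n := Nat.mul_le_mul_right n (by omega)
  rw [hmulidx] at hle
  exact (dmono (i+n) (R*n) hle).trans hfin1

/-- If C has the UAFPP, M has the AFPP, and ρ(T_u(δ(u)), δ(u)) ≤ b uniformly,
then r_H(T) = 0. -/
theorem rH_eq_zero_of_UAFPP {X M : Type*} [MetricSpace X] [MetricSpace M] [Nonempty M]
    (W : X → X → ℝ → X)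
    (hW1 : ∀ x y z : X, ∀ l ∈ Set.Icc (0:ℝ) 1,
      dist z (W x y l) ≤ (1 - l) * dist z x + l * dist z y)
    (hW2 : ∀ x y : X, ∀ l ∈ Set.Icc (0:ℝ) 1, ∀ l' ∈ Set.Icc (0:ℝ) 1,
      dist (W x y l) (W x y l') = |l - l'| * dist x y)
    (hW3 : ∀ x y : X, ∀ l ∈ Set.Icc (0:ℝ) 1, W x y l = W y x (1 - l))
    (hW4 : ∀ x y z w : X, ∀ l ∈ Set.Icc (0:ℝ) 1,
      dist (W x z l) (W y w l) ≤ (1 - l) * dist x y + l * dist z w)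
    (C : Set X) (hC : C.Nonempty)
    (hconv : ∀ x ∈ C, ∀ y ∈ C, ∀ l ∈ Set.Icc (0:ℝ) 1, W x y l ∈ C)
    (hCU : UAFPP C) (hM : AFPP M)
    (δ : M → X) (hδC : ∀ u, δ u ∈ C)
    (hδne : ∀ u v : M, dist (δ u) (δ v) ≤ dist u v)
    (T : X × M → X × M)
    (hT1 : ∀ x ∈ C, ∀ u : M, (T (x, u)).1 ∈ C)
    (hTne : ∀ p q : X × M, p.1 ∈ C → q.1 ∈ C → dist (T p) (T q) ≤ dist p q)
    (b : ℝ) (hb : 0 < b)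
    (hTδ : ∀ u : M, dist (T (δ u, u)).1 (δ u) ≤ b) :
    sInf {r : ℝ | ∃ x ∈ C, ∃ u : M, r = dist (x, u) (T (x, u))} = 0 := by
  classical
  have hhalf : (1/2:ℝ) ∈ Set.Icc (0:ℝ) 1 := by
    rw [Set.mem_Icc]; constructor <;> norm_num
  have key : ∀ ε : ℝ, 0 < ε → ∃ x ∈ C, ∃ u : M, dist (x, u) (T (x, u)) ≤ ε := by
    intro ε hε
    obtain ⟨N, hN⟩ := KM_uniform W hW1 C hconv hCU b hb ε hε
    set Φ : M → X := fun u => KM W (fun y => (T (y, u)).1) (fun _ => (1/2:ℝ)) (δ u) N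
      with hΦeq
    have hfibC : ∀ u : M, ∀ y ∈ C, (T (y, u)).1 ∈ C := fun u y hy => hT1 y hy u
    have hfibne : ∀ u : M, ∀ y ∈ C, ∀ z ∈ C,
        dist (T (y, u)).1 (T (z, u)).1 ≤ dist y z := by
      intro u y hy z hz
      have h1 : dist (T (y, u)).1 (T (z, u)).1 ≤ dist (T (y, u)) (T (z, u)) := by
        rw [Prod.dist_eq]; exact le_max_left _ _
      have h2 := hTne (y, u) (z, u) hy hz
      have h3 : dist ((y, u) : X × M) ((z, u) : X × M) = dist y z := by
        rw [Prod.dist_eq]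
        simp [max_eq_left dist_nonneg]
      rw [h3] at h2
      linarith
    have hfibb : ∀ u : M, dist (δ u) (T (δ u, u)).1 ≤ b := by
      intro u; rw [dist_comm]; exact hTδ u
    have hΦC : ∀ u, Φ u ∈ C := by
      intro u
      rw [hΦeq]
      exact KM_mem W C hconv _ (hfibC u) (δ u) (hδC u) N
    have hΦfix : ∀ u, dist (Φ u) ((T (Φ u, u)).1) ≤ ε := by
      intro u
      have h := hN (fun y => (T (y, u)).1) (hfibC u) (hfibne u) (δ u) (hδC u) (hfibb u)
      rw [hΦeq]
      simpa using h
    have hΦne : ∀ u v, dist (Φ u) (Φ v) ≤ dist u v := by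
      intro u v
      have main : ∀ k, dist (KM W (fun y => (T (y, u)).1) (fun _ => (1/2:ℝ)) (δ u) k)
          (KM W (fun y => (T (y, v)).1) (fun _ => (1/2:ℝ)) (δ v) k) ≤ dist u v := by
        intro k
        induction k with
        | zero => exact hδne u v
        | succ k ih =>
          set au := KM W (fun y => (T (y, u)).1) (fun _ => (1/2:ℝ)) (δ u) k with hau
          set av := KM W (fun y => (T (y, v)).1) (fun _ => (1/2:ℝ)) (δ v) k with hav
          have hmu : au ∈ C := by
            rw [hau]; exact KM_mem W C hconv _ (hfibC u) (δ u) (hδC u) k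
          have hmv : av ∈ C := by
            rw [hav]; exact KM_mem W C hconv _ (hfibC v) (δ v) (hδC v) k
          have hstep : dist (W au ((T (au, u)).1) (1/2)) (W av ((T (av, v)).1) (1/2))
              ≤ (1 - 1/2) * dist au av + (1/2) * dist (T (au, u)).1 (T (av, v)).1 :=
            hW4 au av _ _ (1/2) hhalf
          have h5 : dist (T (au, u)).1 (T (av, v)).1 ≤ dist u v := by
            have ha : dist (T (au, u)).1 (T (av, v)).1 ≤ dist (T (au, u)) (T (av, v)) := by
              rw [Prod.dist_eq]; exact le_max_left _ _
            have hbb := hTne (au, u) (av, v) hmu hmv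
            have hcc : dist ((au, u) : X × M) ((av, v) : X × M)
                = dist au av ⊔ dist u v := Prod.dist_eq
            rw [hcc] at hbb
            have hdd : dist au av ⊔ dist u v ≤ dist u v := sup_le ih le_rfl
            linarith
          show dist (W au ((T (au, u)).1) (1/2)) (W av ((T (av, v)).1) (1/2)) ≤ dist u v
          linarith
      have h := main N
      rw [hΦeq]
      exact h
    set S : M → M := fun u => (T (Φ u, u)).2 with hSeq
    have hSne : ∀ u v, dist (S u) (S v) ≤ dist u v := by
      intro u v
      have h1 : dist (T (Φ u, u)).2 (T (Φ v, v)).2 ≤ dist (T (Φ u, u)) (T (Φ v, v)) := by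
        rw [Prod.dist_eq]; exact le_max_right _ _
      have h2 := hTne (Φ u, u) (Φ v, v) (hΦC u) (hΦC v)
      have hcc : dist ((Φ u, u) : X × M) ((Φ v, v) : X × M)
          = dist (Φ u) (Φ v) ⊔ dist u v := Prod.dist_eq
      rw [hcc] at h2
      have h4 : dist (Φ u) (Φ v) ⊔ dist u v ≤ dist u v := sup_le (hΦne u v) le_rfl
      show dist (T (Φ u, u)).2 (T (Φ v, v)).2 ≤ dist u v
      linarith
    have hinf := hM S hSne
    obtain ⟨u, hu⟩ : ∃ u : M, dist u (S u) ≤ ε := by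
      by_contra hcon
      push_neg at hcon
      have h0 : ({r : ℝ | ∃ u : M, r = dist u (S u)}).Nonempty :=
        ⟨dist (Classical.arbitrary M) (S (Classical.arbitrary M)),
          ⟨Classical.arbitrary M, rfl⟩⟩
      have hge : ε ≤ sInf {r : ℝ | ∃ u : M, r = dist u (S u)} := by
        apply le_csInf h0
        rintro r ⟨u, rfl⟩
        exact (hcon u).le
      rw [hinf] at hge
      linarith
    refine ⟨Φ u, hΦC u, u, ?_⟩
    rw [Prod.dist_eq]
    apply sup_le
    · exact hΦfix u
    · exact hu
  set A := {r : ℝ | ∃ x ∈ C, ∃ u : M, r = dist (x, u) (T (x, u))} with hA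
  have hAne : A.Nonempty := by
    obtain ⟨x0, hx0⟩ := hC
    exact ⟨dist (x0, Classical.arbitrary M) (T (x0, Classical.arbitrary M)),
      x0, hx0, Classical.arbitrary M, rfl⟩
  have hAbdd : BddBelow A := by
    refine ⟨0, ?_⟩
    rintro r ⟨x, hx, u, rfl⟩
    exact dist_nonneg
  have h0le : (0:ℝ) ≤ sInf A := by
    apply le_csInf hAne
    rintro r ⟨x, hx, u, rfl⟩
    exact dist_nonneg
  have hle0 : sInf A ≤ 0 := by
    by_contra hcon
    push_neg at hcon
    obtain ⟨x, hx, u, hxu⟩ := key (sInf A / 2) (by linarith)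
    have hmem : dist (x, u) (T (x, u)) ∈ A := ⟨x, hx, u, rfl⟩
    have := csInf_le hAbdd hmem
    linarith
  linarith
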